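/- For every positive integer n, if θ₂ = e^{2πiα} is a root of modulus 1 of the irreducible polynomial P_n(X) = X^4 - (6+n)X^3 + (10+n)X^2 - (6+n)X + 1, then α is irrational (equivalently, θ₂ is not a root of unity). -/

import Mathlib

open Polynomial

/-- For `x > 2`, the Dickson polynomial `D_k` (first kind) evaluated at `x` exceeds 2. -/
lemma dickson_gt_two {k : ℕ} (hk : 0 < k) {x : ℝ} (hx : 2 < x) :
    2 < (Polynomial.dickson 1 (1 : ℝ) k).eval x := by
  set u : ℝ := (x + Real.sqrt (x ^ 2 - 4)) / 2 with hu
  have hx4 : (0:ℝ) ≤ x ^ 2 - 4 := by nlinarith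
  have hsq : Real.sqrt (x ^ 2 - 4) ^ 2 = x ^ 2 - 4 := Real.sq_sqrt hx4
  have hs0 : 0 ≤ Real.sqrt (x ^ 2 - 4) := Real.sqrt_nonneg _
  have hu1 : 1 < u := by rw [hu]; nlinarith
  have hmul : u * (x - u) = 1 := by rw [hu]; nlinarith
  have heval : (Polynomial.dickson 1 (1 : ℝ) k).eval x = u ^ k + (x - u) ^ k := by
    have := Polynomial.dickson_one_one_eval_add_inv (n := k) u (x - u) hmul
    simpa using this
  have huk : 1 < u ^ k := one_lt_pow₀ hu1 hk.ne'
  have hmulk : u ^ k * (x - u) ^ k = 1 := by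
    rw [← mul_pow, hmul, one_pow]
  rw [heval]
  nlinarith [huk, hmulk]

theorem stmt7 (n : ℕ) (hn : 0 < n) (θ : ℂ) (habs : ‖θ‖ = 1)
    (hroot : θ^4 - (6+(n:ℂ))*θ^3 + (10+(n:ℂ))*θ^2 - (6+(n:ℂ))*θ + 1 = 0) :
    ∀ k : ℕ, 0 < k → θ^k ≠ 1 := by
  intro k hk hθk
  have hθ0 : θ ≠ 0 := by
    intro h; rw [h] at habs; simp at habs
  set t : ℝ := 2 * θ.re with htdef
  have hconj : (starRingEnd ℂ) θ = θ⁻¹ := by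
    rw [Complex.inv_def, Complex.normSq_eq_norm_sq, habs]
    simp
  have htC : (t : ℂ) = θ + θ⁻¹ := by
    rw [← hconj, Complex.add_conj, htdef]
  -- t satisfies the quadratic
  have hkey : θ ^ 2 * ((θ + θ⁻¹) ^ 2 - (6 + (n:ℂ)) * (θ + θ⁻¹) + (8 + (n:ℂ)))
      = θ^4 - (6+(n:ℂ))*θ^3 + (10+(n:ℂ))*θ^2 - (6+(n:ℂ))*θ + 1 := by
    field_simp
    ring
  have hqC : (t : ℂ) ^ 2 - (6 + (n:ℂ)) * t + (8 + (n:ℂ)) = 0 := by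
    rw [htC]
    rcases mul_eq_zero.mp (hkey.trans hroot) with h | h
    · exact absurd h (pow_ne_zero 2 hθ0)
    · exact h
  have hqR : t ^ 2 - (6 + (n:ℝ)) * t + (8 + (n:ℝ)) = 0 := by
    have : ((t ^ 2 - (6 + (n:ℝ)) * t + (8 + (n:ℝ)) : ℝ) : ℂ) = 0 := by
      push_cast
      convert hqC using 2
    exact_mod_cast this
  -- |t| ≤ 2
  have htle : |t| ≤ 2 := by
    have h1 : |θ.re| ≤ ‖θ‖ := Complex.abs_re_le_norm θ
    rw [habs] at h1
    rw [htdef, abs_mul]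
    simp only [abs_two]
    nlinarith
  -- the quadratic over ℚ
  set q : ℚ[X] := X ^ 2 - C (6 + (n:ℚ)) * X + C (8 + (n:ℚ)) with hqdef
  have hqmonic : q.Monic := by
    unfold q
    monicity!
  have haq : aeval t q = 0 := by
    unfold q
    simp only [map_add, map_sub, map_mul, map_pow, aeval_X, aeval_C, map_natCast, map_ofNat]
    linear_combination hqR
  have hint : IsIntegral ℚ t := ⟨q, hqmonic, by rwa [← aeval_def]⟩
  -- Dickson polynomial value at t is 2
  have hDR : ∀ s : ℝ, aeval s (Polynomial.dickson 1 (1 : ℚ) k)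
      = (Polynomial.dickson 1 (1 : ℝ) k).eval s := by
    intro s
    rw [aeval_def, eval₂_eq_eval_map, Polynomial.map_dickson]
    norm_num
  have hDt : aeval t (Polynomial.dickson 1 (1 : ℚ) k) = 2 := by
    have h2 : (((Polynomial.dickson 1 (1 : ℝ) k).eval t : ℝ) : ℂ)
        = (Polynomial.dickson 1 (1 : ℂ) k).eval ((t : ℝ) : ℂ) := by
      have h := Polynomial.eval₂_at_apply (p := Polynomial.dickson 1 (1 : ℝ) k)
        (algebraMap ℝ ℂ) t
      rw [← Polynomial.eval_map, Polynomial.map_dickson] at h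
      simpa using h.symm
    have h3 : (Polynomial.dickson 1 (1 : ℂ) k).eval (t : ℂ) = 2 := by
      rw [htC, Polynomial.dickson_one_one_eval_add_inv θ θ⁻¹ (mul_inv_cancel₀ hθ0)]
      rw [hθk, inv_pow, hθk]
      norm_num
    have h4 : (((Polynomial.dickson 1 (1 : ℝ) k).eval t : ℝ) : ℂ) = 2 := by rw [h2, h3]
    rw [hDR t]
    exact_mod_cast h4
  -- minpoly divides q
  have hg : minpoly ℚ t ∣ q := minpoly.dvd ℚ t haq
  have hq0 : q ≠ 0 := hqmonic.ne_zero
  have hqdeg : q.natDegree = 2 := by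
    unfold q
    compute_degree!
  have hgdeg : (minpoly ℚ t).natDegree ≤ 2 := hqdeg ▸ Polynomial.natDegree_le_of_dvd hg hq0
  have hgpos : 0 < (minpoly ℚ t).natDegree := minpoly.natDegree_pos hint
  interval_cases hdeg : (minpoly ℚ t).natDegree
  · -- degree 1 : t is rational
    obtain ⟨r, hr⟩ := (minpoly.natDegree_eq_one_iff).mp hdeg
    have haqr : aeval r q = 0 := by
      have h := haq
      rw [← hr, aeval_algebraMap_apply] at h
      have h' : (algebraMap ℚ ℝ) (aeval r q) = (algebraMap ℚ ℝ) 0 := by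
        rw [map_zero]; exact_mod_cast h
      exact (algebraMap ℚ ℝ).injective h'
    have hrq : r ^ 2 - (6 + (n:ℚ)) * r + (8 + (n:ℚ)) = 0 := by
      unfold q at haqr
      simp only [map_add, map_sub, map_mul, map_pow, aeval_X, aeval_C,
        Algebra.algebraMap_self, RingHom.id_apply] at haqr
      linarith [haqr]
    -- r is an algebraic integer hence an integer
    have hrint : IsIntegral ℤ r := by
      refine ⟨X ^ 2 - C (6 + (n:ℤ)) * X + C (8 + (n:ℤ)), by monicity!, ?_⟩
      rw [← aeval_def]
      simp only [map_add, map_sub, map_mul, map_pow, aeval_X, aeval_C, map_intCast,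
        map_natCast, map_ofNat]
      linear_combination hrq
    obtain ⟨m, hm⟩ := IsIntegrallyClosed.isIntegral_iff.mp hrint
    rw [eq_intCast] at hm
    have hrval : (r : ℝ) = t := by rw [← hr]; norm_num
    have hmR : ((m : ℝ)) = t := by
      rw [← hrval, ← hm]; norm_cast
    have habs2 := abs_le.mp htle
    have hm1 : (-2 : ℤ) ≤ m := by
      have : (-2 : ℝ) ≤ (m : ℝ) := by rw [hmR]; linarith [habs2.1]
      exact_mod_cast this
    have hm2 : m ≤ 2 := by
      have : ((m : ℝ)) ≤ 2 := by rw [hmR]; linarith [habs2.2]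
      exact_mod_cast this
    have hmq : m ^ 2 - (6 + (n:ℤ)) * m + (8 + (n:ℤ)) = 0 := by
      have : ((m:ℚ)) ^ 2 - (6 + (n:ℚ)) * (m:ℚ) + (8 + (n:ℚ)) = 0 := by
        rw [hm]; exact hrq
      exact_mod_cast this
    have hnZ : (1 : ℤ) ≤ (n : ℤ) := by exact_mod_cast hn
    interval_cases m <;> omega
  · -- degree 2 : minpoly = q
    have hgeq : q = minpoly ℚ t :=
      Polynomial.eq_of_monic_of_dvd_of_natDegree_le (minpoly.monic hint) hqmonic hg
        (by rw [hqdeg, hdeg])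
    have hDdvd : minpoly ℚ t ∣ (Polynomial.dickson 1 (1 : ℚ) k - C 2) := by
      apply minpoly.dvd
      rw [map_sub, hDt, aeval_C]
      norm_num
    set t' : ℝ := 6 + n - t with ht'
    have haq' : aeval t' q = 0 := by
      unfold q
      simp only [map_add, map_sub, map_mul, map_pow, aeval_X, aeval_C, map_natCast, map_ofNat]
      rw [ht']
      linear_combination hqR
    have hD' : aeval t' (Polynomial.dickson 1 (1 : ℚ) k - C 2) = 0 := by
      obtain ⟨c, hc⟩ := hDdvd
      rw [hc, ← hgeq, map_mul, haq', zero_mul]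
    have hDt' : (Polynomial.dickson 1 (1 : ℝ) k).eval t' = 2 := by
      rw [map_sub, aeval_C, hDR t'] at hD'
      simp only [map_ofNat] at hD'
      linarith [hD']
    have ht'gt : 2 < t' := by
      rw [ht']
      have h1 : (1:ℝ) ≤ n := by exact_mod_cast hn
      have h2 := abs_le.mp htle
      linarith [h2.2]
    have hfin := dickson_gt_two hk ht'gt
    rw [hDt'] at hfin
    norm_num at hfin
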